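/- Let n ≥ 1 and let S_n(Sym_n) be the monoid presented by generators x_1,…,x_n and relations x_{σ(1)}x_{σ(2)}⋯x_{σ(n)} = x_1x_2⋯x_n for all σ ∈ Sym_n. Then the map from ℕ^n to S_n(Sym_n) sending (m_1,…,m_n) to the element x_1^{m_1}·x_ε·x_2^{m_2}⋯x_n^{m_n}, where x_ε = x_1x_2⋯x_n, is injective. -/

import Mathlib

/-- The word `x_{σ(1)} x_{σ(2)} ⋯ x_{σ(n)}` in the free monoid on `n` generators
(generator `x_j` is indexed by `j-1 : Fin n`). -/
def permWord {n : ℕ} (σ : Equiv.Perm (Fin n)) : FreeMonoid (Fin n) :=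
  FreeMonoid.ofList (List.ofFn fun i => σ i)

/-- The word `x_ε = x_1 x_2 ⋯ x_n`. -/
def epsWord (n : ℕ) : FreeMonoid (Fin n) :=
  FreeMonoid.ofList (List.ofFn fun i : Fin n => i)

/-- The defining relations `x_{σ(1)} ⋯ x_{σ(n)} = x_1 ⋯ x_n`, `σ ∈ Sym_n`. -/
def symRel (n : ℕ) : FreeMonoid (Fin n) → FreeMonoid (Fin n) → Prop :=
  fun a b => ∃ σ : Equiv.Perm (Fin n), a = permWord σ ∧ b = epsWord n

/-- The canonical projection from the free monoid onto `S_n(Sym_n)`. -/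
def proj (n : ℕ) : FreeMonoid (Fin n) →* PresentedMonoid (symRel n) :=
  PresentedMonoid.mk (symRel n)

/-- `u` contains a subword of the form `x_{σ(1)} ⋯ x_{σ(n)}` for some `σ ∈ Sym_n`. -/
def HasPermSubword {n : ℕ} (u : FreeMonoid (Fin n)) : Prop :=
  ∃ (σ : Equiv.Perm (Fin n)) (a b : FreeMonoid (Fin n)), u = a * permWord σ * b

/-- The word `x_1^{m_1} · x_ε · x_2^{m_2} ⋯ x_n^{m_n}` (0-indexed: `m i` is the
exponent of generator `i`). -/
def normalWord (n : ℕ) (h : 0 < n) (m : Fin n → ℕ) : FreeMonoid (Fin n) :=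
  FreeMonoid.ofList (List.replicate (m ⟨0, h⟩) ⟨0, h⟩) * epsWord n *
    FreeMonoid.ofList (((List.finRange n).drop 1).flatMap fun i => List.replicate (m i) i)

/-- Count of a letter in a nodup-indexed flatMap of replicates. -/
lemma count_flatMap_replicate {α : Type*} [DecidableEq α] (m : α → ℕ) (i : α) :
    ∀ l : List α, l.Nodup →
      (l.flatMap fun j => List.replicate (m j) j).count i = if i ∈ l then m i else 0 := by
  intro l hl
  induction l with
  | nil => simp
  | cons a l ih =>
    simp only [List.flatMap_cons, List.count_append, List.count_replicate,
      ih hl.of_cons, List.mem_cons]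
    obtain ⟨ha, -⟩ := List.nodup_cons.mp hl
    by_cases h : i = a
    · subst h
      simp [ha]
    · simp [h, Ne.symm h]

/-- Count of a letter in `List.ofFn σ` for a permutation `σ` is 1. -/
lemma count_ofFn_perm {n : ℕ} (σ : Equiv.Perm (Fin n)) (i : Fin n) :
    (List.ofFn fun j => σ j).count i = 1 := by
  apply List.count_eq_one_of_mem
  · rw [List.ofFn_eq_map]
    exact (List.nodup_finRange n).map σ.injective
  · rw [List.mem_ofFn]
    exact ⟨σ⁻¹ i, by simp⟩

lemma count_ofFn_id {n : ℕ} (i : Fin n) : (List.ofFn fun j : Fin n => j).count i = 1 := by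
  simpa using count_ofFn_perm (Equiv.refl (Fin n)) i

/-- The counting homomorphism is invariant across the congruence. -/
lemma count_eq_of_conGen {n : ℕ} (i : Fin n) {u v : FreeMonoid (Fin n)}
    (h : conGen (symRel n) u v) : FreeMonoid.count i u = FreeMonoid.count i v := by
  have key : conGen (symRel n) ≤ Con.ker (FreeMonoid.count i) := by
    apply Con.conGen_le.mpr
    rintro a b ⟨σ, rfl, rfl⟩
    show FreeMonoid.count i _ = FreeMonoid.count i _
    erw [FreeMonoid.count_apply, FreeMonoid.count_apply]
    refine congrArg Multiplicative.ofAdd ?_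
    show (List.ofFn fun j => σ j).count i = (List.ofFn fun j : Fin n => j).count i
    rw [count_ofFn_perm, count_ofFn_id]
  exact key h

lemma count_normalWord {n : ℕ} (h : 0 < n) (m : Fin n → ℕ) (i : Fin n) :
    FreeMonoid.count i (normalWord n h m) = Multiplicative.ofAdd (m i + 1) := by
  obtain ⟨k, rfl⟩ : ∃ k, n = k + 1 := ⟨n - 1, (Nat.succ_pred_eq_of_pos h).symm⟩
  have hz : (⟨0, h⟩ : Fin (k + 1)) = 0 := rfl
  have hdrop : (List.finRange (k + 1)).drop 1 = (List.finRange k).map Fin.succ := by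
    rw [List.finRange_succ]
    rfl
  have hmem : ∀ i : Fin (k + 1), i ∈ (List.finRange (k + 1)).drop 1 ↔ i ≠ 0 := by
    intro i
    rw [hdrop, List.mem_map]
    constructor
    · rintro ⟨j, _, rfl⟩
      exact Fin.succ_ne_zero j
    · intro hi
      exact ⟨i.pred hi, List.mem_finRange _, Fin.succ_pred i hi⟩
  have hnodup : ((List.finRange (k + 1)).drop 1).Nodup :=
    (List.nodup_finRange (k + 1)).sublist (List.drop_sublist 1 _)
  rw [normalWord, map_mul, map_mul]
  erw [FreeMonoid.count_apply, FreeMonoid.count_apply,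
    FreeMonoid.count_apply]
  show Multiplicative.ofAdd ((List.replicate (m ⟨0, h⟩) (⟨0, h⟩ : Fin (k+1))).count i) *
      Multiplicative.ofAdd ((List.ofFn fun j : Fin (k+1) => j).count i) *
      Multiplicative.ofAdd ((((List.finRange (k+1)).drop 1).flatMap
        fun j => List.replicate (m j) j).count i) = Multiplicative.ofAdd (m i + 1)
  rw [count_ofFn_id i,
    count_flatMap_replicate m i _ hnodup, List.count_replicate,
    ← ofAdd_add, ← ofAdd_add]
  congr 1
  simp only [hmem i]
  by_cases hi : i = 0
  · simp [hi, hz]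
  · simp [hi, hz, Ne.symm hi, Nat.add_comm]

/-- The map `(m_1, …, m_n) ↦ x_1^{m_1} · x_ε · x_2^{m_2} ⋯ x_n^{m_n}` from `ℕ^n` to
`S_n(Sym_n)` is injective. -/
theorem normalWord_injective (n : ℕ) (hn : 1 ≤ n) :
    Function.Injective (fun m : Fin n → ℕ => proj n (normalWord n hn m)) := by
  intro m m' h
  simp only [proj, PresentedMonoid.mk] at h
  have hcon : conGen (symRel n) (normalWord n hn m) (normalWord n hn m') :=
    Con.eq _ |>.mp h
  funext i
  have := count_eq_of_conGen i hcon
  rw [count_normalWord, count_normalWord] at this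
  have := Multiplicative.ofAdd.injective this
  omega
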